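/- arXiv:2107.10323 — 6 statements merged into one kernel-verified Lean document; each statement's English description precedes it below -/
import Mathlib

section
/- Lemma 5 (the ironing update changes pseudo-revenue only at the ironed type): Let λ = (λ_ji) be any matrix (j ∈ {1,…,n}, i ∈ {0,1,…,n}), let i ∈ {1,…,n}, γ ∈ ℝ, and let λ' := λ'(γ) be the ironing update. Then for every item k ∈ {1,…,d}: R_j^{λ',k} = R_j^{λ,k} for every j ∈ {1,…,n} with j ≠ i, and φ_j^{λ',k} = φ_j^{λ,k} for every j ∈ {1,…,n} with j ∉ {i−1, i}. -/
open Finset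

noncomputable section

/-! Common setup: a multiproduct monopoly with `d` goods (indexed `1,…,d`) and `n` buyer
types (indexed `1,…,n`, with `0` the outside option).  All vectors over goods/types are
encoded as functions `ℕ → ℝ`. -/

/-- Inner product `⟨x, y⟩ = ∑_{k=1}^d x_k y_k` over the goods `1,…,d`. -/
def dot (d : ℕ) (x y : ℕ → ℝ) : ℝ := ∑ k ∈ Finset.Icc 1 d, x k * y k

/-- `f` is a probability vector on types `1,…,n`. -/
def IsProb (n : ℕ) (f : ℕ → ℝ) : Prop :=
  (∀ i ∈ Finset.Icc 1 n, 0 < f i) ∧ ∑ i ∈ Finset.Icc 1 n, f i = 1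

/-- Cumulative distribution `F_i = ∑_{j=1}^i f_j` (so `F_0 = 0`). -/
def Fc (f : ℕ → ℝ) (i : ℕ) : ℝ := ∑ j ∈ Finset.Icc 1 i, f j

/-- `(q,t)` is a mechanism: `(q_0,t_0) = (0,0)` and `q_i ∈ [0,1]^d` for `i ∈ {1,…,n}`. -/
def IsMechanism (d n : ℕ) (q : ℕ → ℕ → ℝ) (t : ℕ → ℝ) : Prop :=
  (∀ k ∈ Finset.Icc 1 d, q 0 k = 0) ∧ t 0 = 0 ∧
    ∀ i ∈ Finset.Icc 1 n, ∀ k ∈ Finset.Icc 1 d, 0 ≤ q i k ∧ q i k ≤ 1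

/-- Incentive compatibility and individual rationality:
`⟨q_j, θ_j⟩ − t_j ≥ ⟨q_i, θ_j⟩ − t_i` for all `j ∈ {1,…,n}`, `i ∈ {0,…,n}`. -/
def ICIR (d n : ℕ) (θ : ℕ → ℕ → ℝ) (q : ℕ → ℕ → ℝ) (t : ℕ → ℝ) : Prop :=
  ∀ j ∈ Finset.Icc 1 n, ∀ i ∈ Finset.Icc 0 n,
    dot d (q j) (θ j) - t j ≥ dot d (q i) (θ j) - t i

/-- Expected revenue `∑_{i=1}^n f_i t_i`. -/
def revenue (n : ℕ) (f t : ℕ → ℝ) : ℝ := ∑ i ∈ Finset.Icc 1 n, f i * t i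

/-- A mechanism is optimal if it is an IC-IR mechanism whose revenue is at least that of
every IC-IR mechanism. -/
def Optimal (d n : ℕ) (θ : ℕ → ℕ → ℝ) (f : ℕ → ℝ) (q : ℕ → ℕ → ℝ) (t : ℕ → ℝ) : Prop :=
  IsMechanism d n q t ∧ ICIR d n θ q t ∧
    ∀ q' : ℕ → ℕ → ℝ, ∀ t' : ℕ → ℝ, IsMechanism d n q' t' → ICIR d n θ q' t' →
      revenue n f t' ≤ revenue n f t

/-- Upgrade pricing: `{q_0, q_1, …, q_n}` is totally ordered in the componentwise order. -/
def UpgradePricing (d n : ℕ) (q : ℕ → ℕ → ℝ) : Prop :=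
  ∀ i ∈ Finset.Icc 0 n, ∀ j ∈ Finset.Icc 0 n,
    (∀ k ∈ Finset.Icc 1 d, q i k ≤ q j k) ∨ (∀ k ∈ Finset.Icc 1 d, q j k ≤ q i k)

/-- `k`-th coordinate of the virtual value of type `i` under multipliers `lam`:
`φ_i^λ = θ_i − (1/f_i) ∑_{j=1}^n λ_{ji} (θ_j − θ_i)`. -/
def virt (n : ℕ) (θ : ℕ → ℕ → ℝ) (f : ℕ → ℝ) (lam : ℕ → ℕ → ℝ) (i k : ℕ) : ℝ :=
  θ i k - (1 / f i) * ∑ j ∈ Finset.Icc 1 n, lam j i * (θ j k - θ i k)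

/-- Nonnegativity of the multipliers `λ_{ji}`, `j ∈ {1,…,n}`, `i ∈ {0,…,n}`. -/
def NonnegLam (n : ℕ) (lam : ℕ → ℕ → ℝ) : Prop :=
  ∀ j ∈ Finset.Icc 1 n, ∀ i ∈ Finset.Icc 0 n, 0 ≤ lam j i

/-- Flow conservation: `f_i = ∑_{j=0}^n λ_{ij} − ∑_{j=1}^n λ_{ji}` for all `i ∈ {1,…,n}`. -/
def FlowConservation (n : ℕ) (f : ℕ → ℝ) (lam : ℕ → ℕ → ℝ) : Prop :=
  ∀ i ∈ Finset.Icc 1 n,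
    f i = ∑ j ∈ Finset.Icc 0 n, lam i j - ∑ j ∈ Finset.Icc 1 n, lam j i

/-- A flow is downward if `λ_{ji} > 0` with `j, i ∈ {1,…,n}` implies `j > i`. -/
def Downward (n : ℕ) (lam : ℕ → ℕ → ℝ) : Prop :=
  ∀ j ∈ Finset.Icc 1 n, ∀ i ∈ Finset.Icc 1 n, 0 < lam j i → i < j

/-- `q'` is a feasible allocation: `q'_i ∈ [0,1]^d` for `i ∈ {1,…,n}`. -/
def InUnitCube (d n : ℕ) (q : ℕ → ℕ → ℝ) : Prop :=
  ∀ i ∈ Finset.Icc 1 n, ∀ k ∈ Finset.Icc 1 d, 0 ≤ q i k ∧ q i k ≤ 1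

/-- Virtual welfare `∑_{i=1}^n f_i ⟨q_i, φ_i⟩` of an allocation `q` for virtual values `phi`. -/
def vw (d n : ℕ) (f : ℕ → ℝ) (phi : ℕ → ℕ → ℝ) (q : ℕ → ℕ → ℝ) : ℝ :=
  ∑ i ∈ Finset.Icc 1 n, f i * ∑ k ∈ Finset.Icc 1 d, q i k * phi i k

/-- Initial (Myersonian) virtual values: `φ_i = θ_i − ((1 − F_i)/f_i)(θ_{i+1} − θ_i)` for
`i < n`, and `φ_n = θ_n`. -/
def initVirt (n : ℕ) (θ : ℕ → ℕ → ℝ) (f : ℕ → ℝ) (i k : ℕ) : ℝ :=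
  if i < n then θ i k - ((1 - Fc f i) / f i) * (θ (i + 1) k - θ i k) else θ i k

/-- Pseudo-revenues `R_i^k = (1 − F_{i−1}) θ_i^k` for `i ∈ {1,…,n}`, with `R_{n+1}^k = 0`. -/
def pseudoRev (n : ℕ) (θ : ℕ → ℕ → ℝ) (f : ℕ → ℝ) (i k : ℕ) : ℝ :=
  if i ≤ n then (1 - Fc f (i - 1)) * θ i k else 0

/-- The cutoff allocation: `q_i^k = 1` iff `i ≥ i^k`. -/
def cutAlloc (cut : ℕ → ℕ) : ℕ → ℕ → ℝ := fun i k => if cut k ≤ i then 1 else 0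

/-- The instance is weakly monotone w.r.t. cutoffs `cut`:
`θ_i^k ≤ θ_j^k` whenever `i ≤ i^k ≤ j`. -/
def WeaklyMonotone (d n : ℕ) (θ : ℕ → ℕ → ℝ) (cut : ℕ → ℕ) : Prop :=
  ∀ k ∈ Finset.Icc 1 d, ∀ i ∈ Finset.Icc 1 n, ∀ j ∈ Finset.Icc 1 n,
    i ≤ cut k → cut k ≤ j → θ i k ≤ θ j k

/-- The instance is regular w.r.t. cutoffs `cut`:
`φ_i^k ≤ 0 ≤ φ_j^k` whenever `i ≤ i^k ≤ j`. -/
def Regular (d n : ℕ) (θ : ℕ → ℕ → ℝ) (f : ℕ → ℝ) (cut : ℕ → ℕ) : Prop :=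
  ∀ k ∈ Finset.Icc 1 d, ∀ i ∈ Finset.Icc 1 n, ∀ j ∈ Finset.Icc 1 n,
    i ≤ cut k → cut k ≤ j → initVirt n θ f i k ≤ 0 ∧ 0 ≤ initVirt n θ f j k

/-- Monotone types: `θ_i^k ≤ θ_j^k` for all `i ≤ j` and all goods `k`. -/
def MonotoneTypes (d n : ℕ) (θ : ℕ → ℕ → ℝ) : Prop :=
  ∀ i ∈ Finset.Icc 1 n, ∀ j ∈ Finset.Icc 1 n, i ≤ j → ∀ k ∈ Finset.Icc 1 d, θ i k ≤ θ j k

/-- Monotone marginal rates of substitution: all values are positive and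
`θ_i^l / θ_i^k ≤ θ_j^l / θ_j^k` whenever `i ≤ j` and `k ≤ l`. -/
def MonotoneMRS (d n : ℕ) (θ : ℕ → ℕ → ℝ) : Prop :=
  (∀ i ∈ Finset.Icc 1 n, ∀ k ∈ Finset.Icc 1 d, 0 < θ i k) ∧
    ∀ i ∈ Finset.Icc 1 n, ∀ j ∈ Finset.Icc 1 n, i ≤ j →
      ∀ k ∈ Finset.Icc 1 d, ∀ l ∈ Finset.Icc 1 d, k ≤ l →
        θ i l / θ i k ≤ θ j l / θ j k

/-- The initial flow `λ̂_{ji} = 1 − F_i` if `j = i + 1`, and `0` otherwise. -/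
def lamHat (f : ℕ → ℝ) : ℕ → ℕ → ℝ := fun j i => if j = i + 1 then 1 - Fc f i else 0

/-- Extended cutoffs: `i^0 = 1` and `i^{d+1} = n`. -/
def extCut (n d : ℕ) (cut : ℕ → ℕ) (k : ℕ) : ℕ :=
  if k = 0 then 1 else if k ≤ d then cut k else n

/-- The ironing update `λ'(γ)` of `lam` at type `i`:
`λ'_{ji} = γ λ_{ji}` and `λ'_{j(i−1)} = λ_{j(i−1)} + (1−γ) λ_{ji}` for `j > i`;
`λ'_{i(i−1)} = λ_{i(i−1)} − (1−γ) ∑_{j=i+1}^n λ_{ji}`; other entries unchanged. -/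
def ironUpdate (n : ℕ) (lam : ℕ → ℕ → ℝ) (i : ℕ) (γ : ℝ) : ℕ → ℕ → ℝ :=
  fun j r =>
    if i < j ∧ r = i then γ * lam j i
    else if i < j ∧ r = i - 1 then lam j (i - 1) + (1 - γ) * lam j i
    else if j = i ∧ r = i - 1 then
      lam i (i - 1) - (1 - γ) * ∑ j' ∈ Finset.Icc (i + 1) n, lam j' i
    else lam j r

/-- Pseudo-revenue associated to a flow: `R_i^{λ,k} = ∑_{j=i}^n f_j φ_j^{λ,k}`
(so `R_{n+1}^{λ,k} = 0`). -/
def flowRev (n : ℕ) (θ : ℕ → ℕ → ℝ) (f : ℕ → ℝ) (lam : ℕ → ℕ → ℝ) (i k : ℕ) : ℝ :=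
  ∑ j ∈ Finset.Icc i n, f j * virt n θ f lam j k

/-- A finite sequence `(R_i)_{i=1}^n` is quasi-concave: for some `i' ∈ {1,…,n}`,
`R_i ≥ R_j` whenever `i' ≤ i ≤ j` or `j ≤ i ≤ i'` (indices in `{1,…,n}`). -/
def QuasiConcaveSeq (n : ℕ) (R : ℕ → ℝ) : Prop :=
  ∃ i' ∈ Finset.Icc 1 n, ∀ i ∈ Finset.Icc 1 n, ∀ j ∈ Finset.Icc 1 n,
    ((i' ≤ i ∧ i ≤ j) ∨ (j ≤ i ∧ i ≤ i')) → R j ≤ R i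

/-- `Rbar` is the quasi-concave closure of `R` on `{1,…,n}`: the pointwise smallest
quasi-concave sequence dominating `R`. -/
def IsQCClosure (n : ℕ) (R Rbar : ℕ → ℝ) : Prop :=
  QuasiConcaveSeq n Rbar ∧ (∀ i ∈ Finset.Icc 1 n, R i ≤ Rbar i) ∧
    ∀ S : ℕ → ℝ, QuasiConcaveSeq n S → (∀ i ∈ Finset.Icc 1 n, R i ≤ S i) →
      ∀ i ∈ Finset.Icc 1 n, Rbar i ≤ S i

/-- `{a,…,b}` is a candidate ironing interval for the sequence `R` with closure `Rbar`:
an inclusion-maximal contiguous set of indices where `Rbar ≠ R`. -/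
def CandInterval (n : ℕ) (R Rbar : ℕ → ℝ) (a b : ℕ) : Prop :=
  1 ≤ a ∧ a ≤ b ∧ b ≤ n ∧ (∀ i, a ≤ i → i ≤ b → Rbar i ≠ R i) ∧
    (a = 1 ∨ Rbar (a - 1) = R (a - 1)) ∧ (b = n ∨ Rbar (b + 1) = R (b + 1))

/-- The instance is mostly regular w.r.t. cutoffs `cut`, where `Rbar · k` is the
quasi-concave closure of the pseudo-revenues of item `k`:
(1) no partial overlap of candidate ironing intervals of neighboring items;
(2) no candidate ironing interval contains a neighboring cutoff;
(3) not-too-shuffled values on candidate ironing intervals between cutoffs. -/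
def MostlyRegular (d n : ℕ) (θ : ℕ → ℕ → ℝ) (f : ℕ → ℝ) (cut : ℕ → ℕ)
    (Rbar : ℕ → ℕ → ℝ) : Prop :=
  ∀ k, 1 ≤ k → k + 1 ≤ d →
    (∀ a b c e,
      CandInterval n (fun i => pseudoRev n θ f i k) (fun i => Rbar i k) a b →
      CandInterval n (fun i => pseudoRev n θ f i (k + 1)) (fun i => Rbar i (k + 1)) c e →
      (b + 1 < c ∨ e + 1 < a ∨ (c < a ∧ b < e) ∨ (a < c ∧ e < b))) ∧
    (∀ a b,
      (CandInterval n (fun i => pseudoRev n θ f i k) (fun i => Rbar i k) a b ∨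
        CandInterval n (fun i => pseudoRev n θ f i (k + 1)) (fun i => Rbar i (k + 1)) a b) →
      ¬(a ≤ cut k ∧ cut k ≤ b) ∧ ¬(a ≤ cut (k + 1) ∧ cut (k + 1) ≤ b)) ∧
    (∀ a b,
      (CandInterval n (fun i => pseudoRev n θ f i k) (fun i => Rbar i k) a b ∨
        CandInterval n (fun i => pseudoRev n θ f i (k + 1)) (fun i => Rbar i (k + 1)) a b) →
      cut k + 1 ≤ a → b + 1 ≤ cut (k + 1) →
      ∀ i, a ≤ i → i ≤ b → θ a (k + 1) ≤ θ i (k + 1) ∧ θ b k ≤ θ (b + 1) k)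

/-- Allocation of the separate pricing mechanism at prices `p`:
`q_i^k = 1` iff `θ_i^k ≥ p_k` (and `q_0 = 0`). -/
def sepQ (θ : ℕ → ℕ → ℝ) (p : ℕ → ℝ) : ℕ → ℕ → ℝ :=
  fun i k => if i = 0 then 0 else if p k ≤ θ i k then 1 else 0

/-- Transfers of the separate pricing mechanism at prices `p`: `t_i = ∑_{k=1}^d p_k q_i^k`. -/
def sepT (d : ℕ) (θ : ℕ → ℕ → ℝ) (p : ℕ → ℝ) : ℕ → ℝ :=
  fun i => ∑ k ∈ Finset.Icc 1 d, p k * sepQ θ p i k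

lemma virt_iron_eq (n : ℕ) (θ : ℕ → ℕ → ℝ) (f : ℕ → ℝ) (lam : ℕ → ℕ → ℝ)
    (i : ℕ) (γ : ℝ) (m k : ℕ) (h1 : m ≠ i - 1) (h2 : m ≠ i) :
    virt n θ f (ironUpdate n lam i γ) m k = virt n θ f lam m k := by
  unfold virt
  congr 2
  refine Finset.sum_congr rfl fun j' _ => ?_
  simp [ironUpdate, h1, h2]

lemma iron_sum_pair (n : ℕ) (θ : ℕ → ℕ → ℝ) (f : ℕ → ℝ) (lam : ℕ → ℕ → ℝ)
    (i : ℕ) (γ : ℝ) (k : ℕ) (h2i : 2 ≤ i) (hin : i ≤ n) :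
    (∑ j' ∈ Finset.Icc 1 n, ironUpdate n lam i γ j' (i-1) * (θ j' k - θ (i-1) k))
      + (∑ j' ∈ Finset.Icc 1 n, ironUpdate n lam i γ j' i * (θ j' k - θ i k))
    = (∑ j' ∈ Finset.Icc 1 n, lam j' (i-1) * (θ j' k - θ (i-1) k))
      + (∑ j' ∈ Finset.Icc 1 n, lam j' i * (θ j' k - θ i k)) := by
  have hii : i - 1 ≠ i := by omega
  have h1 : ∀ j' ∈ Finset.Icc 1 n,
      ironUpdate n lam i γ j' (i-1) * (θ j' k - θ (i-1) k)
        + ironUpdate n lam i γ j' i * (θ j' k - θ i k)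
      = lam j' (i-1) * (θ j' k - θ (i-1) k) + lam j' i * (θ j' k - θ i k)
        + (1-γ) * (θ i k - θ (i-1) k) *
          (if i < j' then lam j' i else if j' = i then
            -(∑ j'' ∈ Finset.Icc (i+1) n, lam j'' i) else 0) := by
    intro j' _
    rcases lt_trichotomy j' i with h | h | h
    · have hne : ¬ i < j' := by omega
      have hne2 : j' ≠ i := by omega
      simp [ironUpdate, hne, hne2, hii]
    · subst h
      simp [ironUpdate, hii]
      ring
    · have hne2 : j' ≠ i := by omega
      simp [ironUpdate, h, hne2, hii]
      ring
  have hsplit : ∀ g : ℕ → ℝ, ∑ j' ∈ Finset.Icc 1 n, g j'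
      = ∑ j' ∈ Finset.Icc 1 i, g j' + ∑ j' ∈ Finset.Icc (i+1) n, g j' := by
    intro g
    rw [show Finset.Icc 1 n = Finset.Ioc 0 n from by rw [← Finset.Icc_add_one_left_eq_Ioc, zero_add],
        show Finset.Icc 1 i = Finset.Ioc 0 i from by rw [← Finset.Icc_add_one_left_eq_Ioc, zero_add],
        show Finset.Icc (i+1) n = Finset.Ioc i n from by rw [← Finset.Icc_add_one_left_eq_Ioc]]
    exact (Finset.sum_Ioc_consecutive _ (Nat.zero_le i) hin).symm
  have h2 : ∑ j' ∈ Finset.Icc 1 n,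
      (if i < j' then lam j' i else if j' = i then
        -(∑ j'' ∈ Finset.Icc (i+1) n, lam j'' i) else 0) = 0 := by
    rw [hsplit]
    have ha : ∑ j' ∈ Finset.Icc 1 i,
        (if i < j' then lam j' i else if j' = i then
          -(∑ j'' ∈ Finset.Icc (i+1) n, lam j'' i) else 0)
        = -(∑ j'' ∈ Finset.Icc (i+1) n, lam j'' i) := by
      rw [Finset.sum_eq_single_of_mem i (by simp; omega)]
      · simp
      · intro b hb hne
        simp only [Finset.mem_Icc] at hb
        have : ¬ i < b := by omega
        simp [this, hne]
    have hb : ∑ j' ∈ Finset.Icc (i+1) n,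
        (if i < j' then lam j' i else if j' = i then
          -(∑ j'' ∈ Finset.Icc (i+1) n, lam j'' i) else 0)
        = ∑ j'' ∈ Finset.Icc (i+1) n, lam j'' i := by
      refine Finset.sum_congr rfl fun j' hj' => ?_
      simp only [Finset.mem_Icc] at hj'
      have : i < j' := by omega
      simp [this]
    rw [ha, hb]; ring
  rw [← Finset.sum_add_distrib, Finset.sum_congr rfl h1]
  rw [Finset.sum_add_distrib, Finset.sum_add_distrib, ← Finset.mul_sum, h2]
  ring

/-- **Lemma 5 (the ironing update changes pseudo-revenue only at the ironed type)**:
`R_j^{λ'(γ),k} = R_j^{λ,k}` for `j ≠ i`, and `φ_j^{λ'(γ),k} = φ_j^{λ,k}` for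
`j ∉ {i−1, i}`. -/
theorem iron_update_local
    (d n : ℕ) (hd : 1 ≤ d) (hn : 1 ≤ n)
    (θ : ℕ → ℕ → ℝ) (f : ℕ → ℝ) (hf : IsProb n f)
    (lam : ℕ → ℕ → ℝ) (i : ℕ) (hi : i ∈ Finset.Icc 1 n) (γ : ℝ) :
    ∀ k ∈ Finset.Icc 1 d,
      (∀ j ∈ Finset.Icc 1 n, j ≠ i →
        flowRev n θ f (ironUpdate n lam i γ) j k = flowRev n θ f lam j k) ∧
      (∀ j ∈ Finset.Icc 1 n, j ≠ i - 1 → j ≠ i →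
        virt n θ f (ironUpdate n lam i γ) j k = virt n θ f lam j k) := by
  have hi' := Finset.mem_Icc.mp hi
  intro k hk
  constructor
  · intro j hj hne
    have hj' := Finset.mem_Icc.mp hj
    unfold flowRev
    rcases lt_or_gt_of_ne hne with hlt | hgt
    · -- j < i, so 2 ≤ i
      have h2i : 2 ≤ i := by omega
      have hfi : f i ≠ 0 := ne_of_gt (hf.1 i hi)
      have hfi1 : f (i-1) ≠ 0 := ne_of_gt (hf.1 (i-1) (by simp; omega))
      have hsub : ({i-1, i} : Finset ℕ) ⊆ Finset.Icc j n := by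
        intro m hm
        simp only [Finset.mem_insert, Finset.mem_singleton] at hm
        simp only [Finset.mem_Icc]
        omega
      have hzero : ∀ m ∈ Finset.Icc j n, m ∉ ({i-1, i} : Finset ℕ) →
          f m * virt n θ f (ironUpdate n lam i γ) m k - f m * virt n θ f lam m k = 0 := by
        intro m _ hm
        simp only [Finset.mem_insert, Finset.mem_singleton, not_or] at hm
        rw [virt_iron_eq n θ f lam i γ m k hm.1 hm.2]
        ring
      have hpair : f (i-1) * virt n θ f (ironUpdate n lam i γ) (i-1) k
            - f (i-1) * virt n θ f lam (i-1) k
          + (f i * virt n θ f (ironUpdate n lam i γ) i k - f i * virt n θ f lam i k) = 0 := by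
        have hkey := iron_sum_pair n θ f lam i γ k h2i hi'.2
        unfold virt
        field_simp
        linarith [hkey]
      have hsum : ∑ m ∈ Finset.Icc j n,
          (f m * virt n θ f (ironUpdate n lam i γ) m k - f m * virt n θ f lam m k) = 0 := by
        rw [← Finset.sum_subset hsub ?_]
        · rw [Finset.sum_insert (by simp; omega), Finset.sum_singleton]
          exact hpair
        · intro m hm hm2
          exact hzero m hm hm2
      have := Finset.sum_sub_distrib (s := Finset.Icc j n)
        (f := fun m => f m * virt n θ f (ironUpdate n lam i γ) m k)
        (g := fun m => f m * virt n θ f lam m k)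
      rw [this] at hsum
      linarith [hsum]
    · refine Finset.sum_congr rfl fun m hm => ?_
      have hm' := Finset.mem_Icc.mp hm
      rw [virt_iron_eq n θ f lam i γ m k (by omega) (by omega)]
  · intro j hj h1 h2
    exact virt_iron_eq n θ f lam i γ j k h1 h2
end
end

section
/- Induction step of Lemma 6 (existence of the ironing parameter γ): Let λ be a nonnegative downward matrix (λ_ji ≥ 0 for all j ∈ {1,…,n}, i ∈ {0,1,…,n}, and λ_ji > 0 with j,i ∈ {1,…,n} implies j > i), let i ∈ {1,…,n} and k ∈ {1,…,d}. Then the map γ ↦ R_i^{λ'(γ),k} is affine in γ, with R_i^{λ'(1),k} = R_i^{λ,k} and R_i^{λ'(0),k} = R_{i+1}^{λ,k} + f_i θ_i^k. Consequently, for every real number c lying between R_i^{λ,k} and R_{i+1}^{λ,k} + f_i θ_i^k, there exists γ ∈ [0,1] such that R_i^{λ'(γ),k} = c. -/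
open Finset

noncomputable section

/-- **Induction step of Lemma 6 (existence of the ironing parameter γ)**: for a
nonnegative downward matrix `λ`, the map `γ ↦ R_i^{λ'(γ),k}` is affine, takes the value
`R_i^{λ,k}` at `γ = 1` and `R_{i+1}^{λ,k} + f_i θ_i^k` at `γ = 0`; hence every value in
between is attained at some `γ ∈ [0,1]`. -/
theorem ironing_gamma_exists
    (d n : ℕ) (hd : 1 ≤ d) (hn : 1 ≤ n)
    (θ : ℕ → ℕ → ℝ) (f : ℕ → ℝ) (hf : IsProb n f)
    (lam : ℕ → ℕ → ℝ) (hnn : NonnegLam n lam) (hdown : Downward n lam)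
    (i : ℕ) (hi : i ∈ Finset.Icc 1 n) (k : ℕ) (hk : k ∈ Finset.Icc 1 d) :
    (∃ a b : ℝ, ∀ γ : ℝ, flowRev n θ f (ironUpdate n lam i γ) i k = a * γ + b) ∧
    flowRev n θ f (ironUpdate n lam i 1) i k = flowRev n θ f lam i k ∧
    flowRev n θ f (ironUpdate n lam i 0) i k = flowRev n θ f lam (i + 1) k + f i * θ i k ∧
    ∀ c : ℝ,
      min (flowRev n θ f lam i k) (flowRev n θ f lam (i + 1) k + f i * θ i k) ≤ c →
      c ≤ max (flowRev n θ f lam i k) (flowRev n θ f lam (i + 1) k + f i * θ i k) →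
      ∃ γ ∈ Set.Icc (0 : ℝ) 1, flowRev n θ f (ironUpdate n lam i γ) i k = c := by
  obtain ⟨hi1, hin⟩ := Finset.mem_Icc.mp hi
  have hfi : f i ≠ 0 := ne_of_gt (hf.1 i hi)
  have hzero : ∀ j ∈ Finset.Icc 1 n, ¬ i < j → lam j i = 0 := by
    intro j hj hij
    by_contra h
    have hge := hnn j hj i (Finset.mem_Icc.mpr ⟨Nat.zero_le _, hin⟩)
    exact hij (hdown j hj i hi (lt_of_le_of_ne hge (Ne.symm h)))
  set T : ℝ := ∑ j ∈ Finset.Icc 1 n, lam j i * (θ j k - θ i k) with hT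
  have hsplit : Finset.Icc i n = insert i (Finset.Icc (i+1) n) := by
    ext x; simp only [Finset.mem_Icc, Finset.mem_insert]; omega
  have hnotmem : i ∉ Finset.Icc (i+1) n := by simp
  -- the i-th term for the updated flow
  have h2 : ∀ γ : ℝ, f i * virt n θ f (ironUpdate n lam i γ) i k
      = f i * θ i k - γ * T := by
    intro γ
    have hcol : ∑ j' ∈ Finset.Icc 1 n,
        ironUpdate n lam i γ j' i * (θ j' k - θ i k) = γ * T := by
      rw [hT, Finset.mul_sum]
      apply Finset.sum_congr rfl
      intro j' hj'
      unfold ironUpdate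
      by_cases h : i < j'
      · rw [if_pos ⟨h, rfl⟩]
        ring
      · have hne : ¬ i = i - 1 := by omega
        rw [hzero j' hj' h]
        simp [h, hne]
    unfold virt
    rw [hcol]
    field_simp
  -- the i-th term for the original flow
  have h2' : f i * virt n θ f lam i k = f i * θ i k - T := by
    unfold virt
    rw [← hT]
    field_simp
  -- terms above i are unchanged
  have h1 : ∀ γ : ℝ, ∀ j ∈ Finset.Icc (i+1) n,
      f j * virt n θ f (ironUpdate n lam i γ) j k = f j * virt n θ f lam j k := by
    intro γ j hj
    obtain ⟨hj1, hj2⟩ := Finset.mem_Icc.mp hj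
    congr 1
    unfold virt
    congr 1
    congr 1
    apply Finset.sum_congr rfl
    intro j' _
    have hji : ¬ j = i := by omega
    have hji' : ¬ j = i - 1 := by omega
    unfold ironUpdate
    simp [hji, hji']
  have key : ∀ γ : ℝ, flowRev n θ f (ironUpdate n lam i γ) i k
      = flowRev n θ f lam (i+1) k + f i * θ i k - γ * T := by
    intro γ
    unfold flowRev
    rw [hsplit, Finset.sum_insert hnotmem, Finset.sum_congr rfl (h1 γ), h2 γ]
    ring
  have base : flowRev n θ f lam i k
      = flowRev n θ f lam (i+1) k + f i * θ i k - T := by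
    unfold flowRev
    rw [hsplit, Finset.sum_insert hnotmem, h2']
    ring
  refine ⟨⟨-T, flowRev n θ f lam (i+1) k + f i * θ i k, fun γ => by rw [key]; ring⟩,
    by rw [key 1, base]; ring, by rw [key 0]; ring, ?_⟩
  intro c hc1 hc2
  set g : ℝ → ℝ := fun γ => flowRev n θ f lam (i+1) k + f i * θ i k - γ * T with hg
  have hcont : ContinuousOn g (Set.uIcc (0:ℝ) 1) := by
    apply Continuous.continuousOn
    fun_prop
  have hg1 : g 1 = flowRev n θ f lam i k := by
    simp only [hg]; rw [base]; ring
  have hg0 : g 0 = flowRev n θ f lam (i + 1) k + f i * θ i k := by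
    simp only [hg]; ring
  have hmem : c ∈ Set.uIcc (g 0) (g 1) := by
    rw [hg0, hg1, Set.uIcc_comm, Set.uIcc, Set.mem_Icc]
    exact ⟨hc1, hc2⟩
  obtain ⟨γ, hγ, hgc⟩ := intermediate_value_uIcc hcont hmem
  refine ⟨γ, ?_, ?_⟩
  · rwa [Set.uIcc_of_le (by norm_num : (0:ℝ) ≤ 1)] at hγ
  · rw [key γ]
    exact hgc
end
end

section
/- Theorem 3, second direction (separate pricing implies upgrade pricing under monotone types): Suppose the type space is monotone, and let p ∈ ℝ^d. Then the separate pricing mechanism at p is IC-IR and is an upgrade pricing mechanism; in particular, its allocation is monotone: i ≤ j implies q_i^k ≤ q_j^k for all k ∈ {1,…,d}. -/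
open Finset

noncomputable section

/-- **Theorem 3, second direction**: under monotone types, the separate pricing mechanism
at any price vector `p` is IC-IR and is an upgrade pricing mechanism; in particular its
allocation is monotone in the type index. -/
theorem separate_is_upgrade
    (d n : ℕ) (hd : 1 ≤ d) (hn : 1 ≤ n)
    (θ : ℕ → ℕ → ℝ) (hθ : ∀ i ∈ Finset.Icc 1 n, ∀ k ∈ Finset.Icc 1 d, 0 ≤ θ i k)
    (f : ℕ → ℝ) (hf : IsProb n f)
    (hmono : MonotoneTypes d n θ) (p : ℕ → ℝ) :
    ICIR d n θ (sepQ θ p) (sepT d θ p) ∧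
    UpgradePricing d n (sepQ θ p) ∧
    ∀ i ∈ Finset.Icc 1 n, ∀ j ∈ Finset.Icc 1 n, i ≤ j →
      ∀ k ∈ Finset.Icc 1 d, sepQ θ p i k ≤ sepQ θ p j k := by
  have hq01 : ∀ i k, (0:ℝ) ≤ sepQ θ p i k ∧ sepQ θ p i k ≤ 1 := by
    intro i k
    unfold sepQ
    split_ifs <;> norm_num
  have hmonoQ : ∀ i ∈ Finset.Icc 0 n, ∀ j ∈ Finset.Icc 0 n, i ≤ j →
      ∀ k ∈ Finset.Icc 1 d, sepQ θ p i k ≤ sepQ θ p j k := by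
    intro i hi j hj hij k hk
    rcases Nat.eq_zero_or_pos i with h0 | hpos
    · subst h0
      simpa [sepQ] using (hq01 j k).1
    have hposj : 0 < j := lt_of_lt_of_le hpos hij
    have hij' : θ i k ≤ θ j k :=
      hmono i (Finset.mem_Icc.mpr ⟨hpos, (Finset.mem_Icc.mp hi).2⟩)
        j (Finset.mem_Icc.mpr ⟨hposj, (Finset.mem_Icc.mp hj).2⟩) hij k hk
    have hi0 : i ≠ 0 := hpos.ne'
    have hj0 : j ≠ 0 := hposj.ne'
    by_cases hc : p k ≤ θ i k
    · have hc' : p k ≤ θ j k := le_trans hc hij'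
      simp [sepQ, hi0, hj0, hc, hc']
    · simp only [sepQ, if_neg hi0, if_neg hc, if_neg hj0]
      split_ifs <;> norm_num
  refine ⟨?_, ?_, ?_⟩
  · intro j hj i hi
    have hj0 : j ≠ 0 := by
      have := (Finset.mem_Icc.mp hj).1; omega
    have key : ∀ m, dot d (sepQ θ p m) (θ j) - sepT d θ p m
        = ∑ k ∈ Finset.Icc 1 d, sepQ θ p m k * (θ j k - p k) := by
      intro m
      unfold dot sepT
      rw [← Finset.sum_sub_distrib]
      exact Finset.sum_congr rfl fun k hk => by ring
    rw [ge_iff_le, key, key]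
    apply Finset.sum_le_sum
    intro k hk
    obtain ⟨h0i, h1i⟩ := hq01 i k
    by_cases hc : p k ≤ θ j k
    · have : sepQ θ p j k = 1 := by simp [sepQ, hj0, hc]
      rw [this]
      nlinarith
    · have : sepQ θ p j k = 0 := by simp [sepQ, hj0, hc]
      rw [this]
      push_neg at hc
      nlinarith
  · intro i hi j hj
    rcases le_total i j with h | h
    · exact Or.inl (hmonoQ i hi j hj h)
    · exact Or.inr (hmonoQ j hj i hi h)
  · intro i hi j hj hij k hk
    have sub : Finset.Icc 1 n ⊆ Finset.Icc 0 n := by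
      intro x hx
      simp only [Finset.mem_Icc] at *
      omega
    exact hmonoQ i (sub hi) j (sub hj) hij k hk
end
end

section
/- Theorem 3, counterexamples without monotonicity: Let d = 2, n = 4, θ_1 = (1,1), θ_2 = (1,3), θ_3 = (3,3), θ_4 = (4,1), and let f be any probability vector with positive entries. (a) The allocation of the separate pricing mechanism at p = (2,2) is not totally ordered in the componentwise order (it assigns q_2 = (0,1) and q_4 = (1,0), which are incomparable), so it is not an upgrade pricing mechanism. (b) The mechanism with q_1 = (0,0), t_1 = 0; q_2 = (0,1), t_2 = 2; q_3 = (1,1), t_3 = 4; q_4 = (1,1), t_4 = 4 (and (q_0,t_0) = (0,0)) is an IC-IR upgrade pricing mechanism, yet there is no p ∈ ℝ^2 such that for every i ∈ {1,…,4}, t_i = Σ_{k=1}^2 p_k q_i^k and ⟨q_i, θ_i⟩ − Σ_k p_k q_i^k ≥ ⟨s, θ_i⟩ − Σ_k p_k s^k for all s ∈ {0,1}^2. -/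
open Finset

noncomputable section

/-- The type space of the counterexample: `θ_1 = (1,1)`, `θ_2 = (1,3)`, `θ_3 = (3,3)`,
`θ_4 = (4,1)`. -/
def θex : ℕ → ℕ → ℝ := fun i k =>
  if i = 1 then 1
  else if i = 2 then (if k = 1 then 1 else 3)
  else if i = 3 then 3
  else if i = 4 then (if k = 1 then 4 else 1)
  else 0

/-- The separate prices `p = (2,2)`. -/
def pex : ℕ → ℝ := fun _ => 2

/-- Allocation of the upgrade pricing counterexample:
`q_1 = (0,0)`, `q_2 = (0,1)`, `q_3 = q_4 = (1,1)` (and `q_0 = 0`). -/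
def qex : ℕ → ℕ → ℝ := fun i k =>
  if i = 2 then (if k = 1 then 0 else 1)
  else if i = 3 ∨ i = 4 then 1
  else 0

/-- Transfers of the upgrade pricing counterexample: `t_2 = 2`, `t_3 = t_4 = 4`. -/
def tex : ℕ → ℝ := fun i => if i = 2 then 2 else if i = 3 ∨ i = 4 then 4 else 0

/-- **Theorem 3, counterexamples without monotonicity** (`d = 2`, `n = 4`):
(a) the separate pricing mechanism at `p = (2,2)` assigns the incomparable bundles
`q_2 = (0,1)` and `q_4 = (1,0)`, hence is not an upgrade pricing mechanism;
(b) the stated upgrade pricing mechanism is IC-IR, yet no vector of separate item prices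
implements its outcome. -/
theorem counterexamples_without_monotonicity
    (f : ℕ → ℝ) (hf : IsProb 4 f) :
    (sepQ θex pex 2 1 = 0 ∧ sepQ θex pex 2 2 = 1 ∧
      sepQ θex pex 4 1 = 1 ∧ sepQ θex pex 4 2 = 0 ∧
      ¬ UpgradePricing 2 4 (sepQ θex pex)) ∧
    (IsMechanism 2 4 qex tex ∧ ICIR 2 4 θex qex tex ∧ UpgradePricing 2 4 qex ∧
      ¬ ∃ p : ℕ → ℝ, ∀ i ∈ Finset.Icc 1 4,
          tex i = (∑ k ∈ Finset.Icc 1 2, p k * qex i k) ∧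
          ∀ s : ℕ → ℝ, (∀ k ∈ Finset.Icc 1 2, s k = 0 ∨ s k = 1) →
            dot 2 s (θex i) - (∑ k ∈ Finset.Icc 1 2, p k * s k) ≤
              dot 2 (qex i) (θex i) - (∑ k ∈ Finset.Icc 1 2, p k * qex i k)) := by
  have h12 : Finset.Icc 1 2 = ({1, 2} : Finset ℕ) := rfl
  constructor
  · refine ⟨by norm_num [sepQ, θex, pex], by norm_num [sepQ, θex, pex],
      by norm_num [sepQ, θex, pex], by norm_num [sepQ, θex, pex], ?_⟩
    intro h
    have h24 := h 2 (by decide) 4 (by decide)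
    rcases h24 with h' | h'
    · have := h' 2 (by decide)
      norm_num [sepQ, θex, pex] at this
    · have := h' 1 (by decide)
      norm_num [sepQ, θex, pex] at this
  refine ⟨⟨?_, ?_, ?_⟩, ?_, ?_, ?_⟩
  · intro k hk; simp [qex]
  · simp [tex]
  · intro i hi k hk
    simp only [Finset.mem_Icc] at hi hk
    obtain ⟨hi1, hi2⟩ := hi; obtain ⟨hk1, hk2⟩ := hk
    interval_cases i <;> interval_cases k <;> norm_num [qex]
  · intro j hj i hi
    simp only [Finset.mem_Icc] at hj hi
    obtain ⟨hj1, hj2⟩ := hj; obtain ⟨hi1, hi2⟩ := hi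
    interval_cases j <;> interval_cases i <;>
      norm_num [dot, h12, qex, tex, θex]
  · intro i hi j hj
    simp only [Finset.mem_Icc] at hi hj
    obtain ⟨hi1, hi2⟩ := hi; obtain ⟨hj1, hj2⟩ := hj
    have mono : ∀ a b : ℕ, a ≤ b → b ≤ 4 → ∀ k ∈ Finset.Icc 1 2, qex a k ≤ qex b k := by
      intro a b hab hb4 k hk
      simp only [Finset.mem_Icc] at hk
      obtain ⟨hk1, hk2⟩ := hk
      have ha4 : a ≤ 4 := le_trans hab hb4
      interval_cases a <;> interval_cases b <;> interval_cases k <;>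
        first | norm_num [qex] | omega
    rcases le_total i j with h | h
    · exact Or.inl (mono i j h hj2)
    · exact Or.inr (mono j i h hi2)
  · rintro ⟨p, hp⟩
    obtain ⟨ht2, -⟩ := hp 2 (by decide)
    obtain ⟨ht3, -⟩ := hp 3 (by decide)
    obtain ⟨-, h4⟩ := hp 4 (by decide)
    have hp2 : p 2 = 2 := by
      simpa [h12, tex, qex] using ht2.symm
    have hp1 : p 1 = 2 := by
      rw [h12] at ht3
      simp [tex, qex, hp2] at ht3
      linarith
    have := h4 (fun k => if k = 1 then 1 else 0)
      (by intro k hk; by_cases h : k = 1 <;> simp [h])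
    rw [h12] at this
    simp [dot, h12, qex, θex, hp1, hp2] at this
    linarith
end
end

section
/- Corollary 1: Suppose the type space is monotone. Let (q,t) be an optimal IC-IR upgrade pricing mechanism with deterministic allocations q_i ∈ {0,1}^d, and suppose there exists p* ∈ ℝ^d such that for each k, p*_k maximizes the single-item revenue p · Σ_{i : θ_i^k ≥ p} f_i over p ∈ ℝ, and q_i^k = 1 if and only if θ_i^k ≥ p*_k for all i, k (i.e., q is the allocation of separate monopoly pricing). Then the separate pricing mechanism at p* is optimal. -/
open Finset

noncomputable section

private lemma telescope_aux (g : ℕ → ℝ) (n : ℕ) :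
    ∑ j ∈ Finset.Icc 1 n, (g j - g (j - 1)) = g n - g 0 := by
  induction n with
  | zero => simp
  | succ m ih =>
    rw [Finset.sum_Icc_succ_top (by omega : 1 ≤ m + 1), ih]
    simp only [Nat.add_sub_cancel]
    ring

/-- **Corollary 1**: under monotone types, if an optimal IC-IR deterministic upgrade
pricing mechanism has the allocation of separate monopoly pricing at prices `p*` (each
`p*_k` maximizing the single-item revenue), then the separate pricing mechanism at `p*`
is optimal. -/
theorem separate_monopoly_pricing_optimal
    (d n : ℕ) (hd : 1 ≤ d) (hn : 1 ≤ n)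
    (θ : ℕ → ℕ → ℝ) (hθ : ∀ i ∈ Finset.Icc 1 n, ∀ k ∈ Finset.Icc 1 d, 0 ≤ θ i k)
    (f : ℕ → ℝ) (hf : IsProb n f)
    (hmono : MonotoneTypes d n θ)
    (q : ℕ → ℕ → ℝ) (t : ℕ → ℝ)
    (hdet : ∀ i ∈ Finset.Icc 1 n, ∀ k ∈ Finset.Icc 1 d, q i k = 0 ∨ q i k = 1)
    (hup : UpgradePricing d n q)
    (hopt : Optimal d n θ f q t)
    (pstar : ℕ → ℝ)
    (hpmax : ∀ k ∈ Finset.Icc 1 d, ∀ p : ℝ,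
      p * (∑ i ∈ (Finset.Icc 1 n).filter (fun i => p ≤ θ i k), f i) ≤
        pstar k * (∑ i ∈ (Finset.Icc 1 n).filter (fun i => pstar k ≤ θ i k), f i))
    (halloc : ∀ i ∈ Finset.Icc 1 n, ∀ k ∈ Finset.Icc 1 d,
      (q i k = 1 ↔ pstar k ≤ θ i k)) :
    Optimal d n θ f (sepQ θ pstar) (sepT d θ pstar) := by
  obtain ⟨hf_pos, hf_sum⟩ := hf
  obtain ⟨⟨hq0, ht0, hq01⟩, hic, hmaxrev⟩ := hopt
  set M : ℕ → ℝ :=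
    fun k => pstar k * ∑ i ∈ (Finset.Icc 1 n).filter (fun i => pstar k ≤ θ i k), f i with hM
  have hM0 : ∀ k ∈ Finset.Icc 1 d, 0 ≤ M k := by
    intro k hk
    have := hpmax k hk 0
    simpa using this
  -- the separate pricing mechanism is a mechanism
  have hsepMech : IsMechanism d n (sepQ θ pstar) (sepT d θ pstar) := by
    refine ⟨fun k _ => by simp [sepQ], by simp [sepT, sepQ], fun i hi k hk => ?_⟩
    have hi0 : i ≠ 0 := by simp only [Finset.mem_Icc] at hi; omega
    simp only [sepQ, if_neg hi0]
    split_ifs <;> norm_num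
  -- the separate pricing mechanism is IC-IR
  have hsepIC : ICIR d n θ (sepQ θ pstar) (sepT d θ pstar) := by
    intro j hj i hi
    simp only [Finset.mem_Icc] at hj hi
    have hj0 : j ≠ 0 := by omega
    have h1 : ∀ m : ℕ, dot d (sepQ θ pstar m) (θ j) - sepT d θ pstar m
        = ∑ k ∈ Finset.Icc 1 d, sepQ θ pstar m k * (θ j k - pstar k) := by
      intro m
      rw [dot, sepT, ← Finset.sum_sub_distrib]
      exact Finset.sum_congr rfl fun k _ => by ring
    rw [ge_iff_le, h1, h1]
    apply Finset.sum_le_sum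
    intro k _
    have hib : 0 ≤ sepQ θ pstar i k ∧ sepQ θ pstar i k ≤ 1 := by
      simp only [sepQ]; split_ifs <;> norm_num
    by_cases h : pstar k ≤ θ j k
    · have hjq : sepQ θ pstar j k = 1 := by simp [sepQ, hj0, h]
      rw [hjq]
      nlinarith [hib.1, hib.2]
    · have hjq : sepQ θ pstar j k = 0 := by simp [sepQ, hj0, h]
      rw [hjq]
      nlinarith [hib.1, hib.2]
  -- increments of the allocation q
  have hdq : ∀ j ∈ Finset.Icc 1 n, ∀ k ∈ Finset.Icc 1 d,
      q j k - q (j - 1) k = 0 ∨ (q j k - q (j - 1) k = 1 ∧ pstar k ≤ θ j k) := by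
    intro j hj k hk
    have hjm := Finset.mem_Icc.mp hj
    have hprev : q (j - 1) k = 0 ∨ q (j - 1) k = 1 := by
      rcases Nat.eq_or_lt_of_le hjm.1 with h1 | h1
      · left; rw [← h1]; exact hq0 k hk
      · exact hdet (j - 1) (Finset.mem_Icc.mpr ⟨by omega, by omega⟩) k hk
    have hmonoq : q (j - 1) k = 1 → q j k = 1 := by
      intro h1
      rcases Nat.eq_or_lt_of_le hjm.1 with he | he
      · exfalso; rw [← he] at h1; rw [hq0 k hk] at h1; norm_num at h1
      · have hjm1 : j - 1 ∈ Finset.Icc 1 n := Finset.mem_Icc.mpr ⟨by omega, by omega⟩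
        have hp : pstar k ≤ θ (j - 1) k := (halloc (j - 1) hjm1 k hk).mp h1
        have hθm : θ (j - 1) k ≤ θ j k := hmono (j - 1) hjm1 j hj (by omega) k hk
        exact (halloc j hj k hk).mpr (le_trans hp hθm)
    rcases hdet j hj k hk with hj1 | hj1
    · left
      rcases hprev with hp1 | hp1
      · rw [hj1, hp1]; ring
      · have := hmonoq hp1; rw [this] at hj1; norm_num at hj1
    · rcases hprev with hp1 | hp1
      · right
        exact ⟨by rw [hj1, hp1]; ring, (halloc j hj k hk).mp hj1⟩
      · left; rw [hj1, hp1]; ring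
  -- key per-term bound
  have hterm : ∀ j ∈ Finset.Icc 1 n, ∀ k ∈ Finset.Icc 1 d,
      (q j k - q (j - 1) k) * θ j k * (∑ i ∈ Finset.Icc j n, f i)
        ≤ (q j k - q (j - 1) k) * M k := by
    intro j hj k hk
    rcases hdq j hj k hk with h0 | ⟨h1, hp⟩
    · rw [h0]; simp
    · rw [h1]; simp only [one_mul]
      have hθ0 : 0 ≤ θ j k := hθ j hj k hk
      have hjm := Finset.mem_Icc.mp hj
      have hsub : Finset.Icc j n ⊆ (Finset.Icc 1 n).filter (fun i => θ j k ≤ θ i k) := by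
        intro i hi
        have him := Finset.mem_Icc.mp hi
        refine Finset.mem_filter.mpr ⟨Finset.mem_Icc.mpr ⟨by omega, him.2⟩, ?_⟩
        exact hmono j hj i (Finset.mem_Icc.mpr ⟨by omega, him.2⟩) him.1 k hk
      have hfs : ∑ i ∈ Finset.Icc j n, f i
          ≤ ∑ i ∈ (Finset.Icc 1 n).filter (fun i => θ j k ≤ θ i k), f i := by
        apply Finset.sum_le_sum_of_subset_of_nonneg hsub
        intro i hi _
        exact le_of_lt (hf_pos i (Finset.mem_filter.mp hi).1)
      calc θ j k * (∑ i ∈ Finset.Icc j n, f i)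
          ≤ θ j k * ∑ i ∈ (Finset.Icc 1 n).filter (fun i => θ j k ≤ θ i k), f i :=
            mul_le_mul_of_nonneg_left hfs hθ0
        _ ≤ M k := hpmax k hk (θ j k)
  -- transfer bound via IC along the chain
  have htle : ∀ i, i ≤ n →
      t i ≤ ∑ j ∈ Finset.Icc 1 i, ∑ k ∈ Finset.Icc 1 d, (q j k - q (j - 1) k) * θ j k := by
    intro i
    induction i with
    | zero => intro _; simp [ht0]
    | succ m ih =>
      intro hm
      have hmn : m ≤ n := by omega
      have hstep := hic (m + 1) (Finset.mem_Icc.mpr ⟨by omega, hm⟩)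
        m (Finset.mem_Icc.mpr ⟨Nat.zero_le _, hmn⟩)
      have hdotdiff : dot d (q (m + 1)) (θ (m + 1)) - dot d (q m) (θ (m + 1))
          = ∑ k ∈ Finset.Icc 1 d, (q (m + 1) k - q m k) * θ (m + 1) k := by
        rw [dot, dot, ← Finset.sum_sub_distrib]
        exact Finset.sum_congr rfl fun k _ => by ring
      rw [Finset.sum_Icc_succ_top (by omega : 1 ≤ m + 1)]
      simp only [Nat.add_sub_cancel]
      have h2 := ih hmn
      have h3 : t (m + 1) ≤ t m + ∑ k ∈ Finset.Icc 1 d, (q (m + 1) k - q m k) * θ (m + 1) k := by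
        have := hstep
        rw [ge_iff_le] at this
        linarith [hdotdiff]
      linarith
  -- revenue of the separate pricing mechanism
  have hrevsep : revenue n f (sepT d θ pstar) = ∑ k ∈ Finset.Icc 1 d, M k := by
    rw [revenue]
    simp only [sepT, Finset.mul_sum]
    rw [Finset.sum_comm]
    apply Finset.sum_congr rfl
    intro k _
    show ∑ x ∈ Finset.Icc 1 n, f x * (pstar k * sepQ θ pstar x k)
        = pstar k * ∑ i ∈ (Finset.Icc 1 n).filter (fun i => pstar k ≤ θ i k), f i
    rw [Finset.mul_sum, Finset.sum_filter]
    apply Finset.sum_congr rfl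
    intro i hi
    have hi0 : i ≠ 0 := by
      have := Finset.mem_Icc.mp hi; omega
    simp only [sepQ, if_neg hi0]
    split_ifs <;> ring
  -- revenue comparison: revenue of (q,t) ≤ revenue of separate pricing
  have hrevle : revenue n f t ≤ revenue n f (sepT d θ pstar) := by
    rw [hrevsep, revenue]
    have step1 : ∑ i ∈ Finset.Icc 1 n, f i * t i
        ≤ ∑ i ∈ Finset.Icc 1 n, f i *
            ∑ j ∈ Finset.Icc 1 i, ∑ k ∈ Finset.Icc 1 d, (q j k - q (j - 1) k) * θ j k := by
      apply Finset.sum_le_sum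
      intro i hi
      have := Finset.mem_Icc.mp hi
      exact mul_le_mul_of_nonneg_left (htle i this.2) (le_of_lt (hf_pos i hi))
    have step2 : ∑ i ∈ Finset.Icc 1 n, f i *
          ∑ j ∈ Finset.Icc 1 i, ∑ k ∈ Finset.Icc 1 d, (q j k - q (j - 1) k) * θ j k
        = ∑ j ∈ Finset.Icc 1 n, ∑ i ∈ Finset.Icc j n,
            f i * ∑ k ∈ Finset.Icc 1 d, (q j k - q (j - 1) k) * θ j k := by
      simp only [Finset.mul_sum]
      rw [Finset.sum_comm' (s := Finset.Icc 1 n) (t := fun i => Finset.Icc 1 i)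
        (t' := Finset.Icc 1 n) (s' := fun j => Finset.Icc j n) ?_]
      intro i j
      simp only [Finset.mem_Icc]
      omega
    have step3 : ∑ j ∈ Finset.Icc 1 n, ∑ i ∈ Finset.Icc j n,
          f i * ∑ k ∈ Finset.Icc 1 d, (q j k - q (j - 1) k) * θ j k
        = ∑ k ∈ Finset.Icc 1 d, ∑ j ∈ Finset.Icc 1 n,
            (q j k - q (j - 1) k) * θ j k * (∑ i ∈ Finset.Icc j n, f i) := by
      have inner : ∀ j ∈ Finset.Icc 1 n, (∑ i ∈ Finset.Icc j n,
            f i * ∑ k ∈ Finset.Icc 1 d, (q j k - q (j - 1) k) * θ j k)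
          = ∑ k ∈ Finset.Icc 1 d, (q j k - q (j - 1) k) * θ j k * (∑ i ∈ Finset.Icc j n, f i) := by
        intro j _
        rw [← Finset.sum_mul, Finset.mul_sum]
        exact Finset.sum_congr rfl fun k _ => mul_comm _ _
      rw [Finset.sum_congr rfl inner, Finset.sum_comm]
    have step4 : ∑ k ∈ Finset.Icc 1 d, ∑ j ∈ Finset.Icc 1 n,
          (q j k - q (j - 1) k) * θ j k * (∑ i ∈ Finset.Icc j n, f i)
        ≤ ∑ k ∈ Finset.Icc 1 d, M k := by
      apply Finset.sum_le_sum
      intro k hk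
      calc ∑ j ∈ Finset.Icc 1 n, (q j k - q (j - 1) k) * θ j k * (∑ i ∈ Finset.Icc j n, f i)
          ≤ ∑ j ∈ Finset.Icc 1 n, (q j k - q (j - 1) k) * M k :=
            Finset.sum_le_sum fun j hj => hterm j hj k hk
        _ = (∑ j ∈ Finset.Icc 1 n, (q j k - q (j - 1) k)) * M k := by rw [Finset.sum_mul]
        _ = (q n k - q 0 k) * M k := by
            rw [telescope_aux (fun j => q j k) n]
        _ ≤ M k := by
            rw [hq0 k hk]
            have hb := hq01 n (Finset.mem_Icc.mpr ⟨hn, le_refl n⟩) k hk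
            nlinarith [hM0 k hk, hb.2]
    linarith
  exact ⟨hsepMech, hsepIC, fun q' t' hm' hic' =>
    le_trans (hmaxrev q' t' hm' hic') hrevle⟩
end
end

section
/- Corollary 2 (optimality of separate monopoly pricing for monotone regular instances): Suppose the type space is monotone and the instance is regular with respect to cutoffs i^1, …, i^d ∈ {1,…,n}. Then the separate pricing mechanism at the price vector p with p_k = θ_{i^k}^k for each k is optimal. -/
open Finset

noncomputable section

/-! ### Auxiliary lemmas -/

private def gfun (n : ℕ) (θ : ℕ → ℕ → ℝ) (f : ℕ → ℝ) (i k : ℕ) : ℝ :=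
  if i ≤ n then (1 - Fc f (i - 1)) * θ i k else 0

lemma Fc_zero (f : ℕ → ℝ) : Fc f 0 = 0 := by simp [Fc]

lemma Fc_succ (f : ℕ → ℝ) (m : ℕ) : Fc f (m + 1) = Fc f m + f (m + 1) := by
  unfold Fc
  rw [Finset.sum_Icc_succ_top (by omega : 1 ≤ m + 1)]

lemma Fc_mono (n : ℕ) (f : ℕ → ℝ) (hf : IsProb n f) {i j : ℕ} (hij : i ≤ j) (hj : j ≤ n) :
    Fc f i ≤ Fc f j := by
  unfold Fc
  apply Finset.sum_le_sum_of_subset_of_nonneg (Finset.Icc_subset_Icc_right hij)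
  intro x hx _
  have hx' := Finset.mem_Icc.mp hx
  exact le_of_lt (hf.1 x (Finset.mem_Icc.mpr ⟨hx'.1, le_trans hx'.2 hj⟩))

lemma Fc_le_one (n : ℕ) (f : ℕ → ℝ) (hf : IsProb n f) {i : ℕ} (hi : i ≤ n) : Fc f i ≤ 1 := by
  have h := Fc_mono n f hf hi le_rfl
  have hn : Fc f n = 1 := hf.2
  linarith

lemma sum_Icc_f (n : ℕ) (f : ℕ → ℝ) (hf : IsProb n f) {m : ℕ} (h1 : 1 ≤ m) (h2 : m ≤ n + 1) :
    ∑ i ∈ Finset.Icc m n, f i = 1 - Fc f (m - 1) := by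
  obtain ⟨a, rfl⟩ : ∃ a, m = a + 1 := ⟨m - 1, by omega⟩
  have key := Finset.sum_Ico_consecutive (fun i => f i)
    (by omega : 1 ≤ a + 1) (by omega : a + 1 ≤ n + 1)
  rw [Finset.Ico_add_one_right_eq_Icc, Finset.Ico_add_one_right_eq_Icc, Finset.Ico_add_one_right_eq_Icc] at key
  have hFn : (∑ i ∈ Finset.Icc 1 n, f i) = 1 := hf.2
  have hFa : Fc f (a + 1 - 1) = ∑ j ∈ Finset.Icc 1 a, f j := by simp [Fc]
  rw [hFa]
  linarith

lemma virt_step (n : ℕ) (θ : ℕ → ℕ → ℝ) (f : ℕ → ℝ) (hf : IsProb n f)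
    {i : ℕ} (h1 : 1 ≤ i) (h2 : i ≤ n) (k : ℕ) :
    f i * initVirt n θ f i k = gfun n θ f i k - gfun n θ f (i + 1) k := by
  have hfi : 0 < f i := hf.1 i (Finset.mem_Icc.mpr ⟨h1, h2⟩)
  have hne : f i ≠ 0 := ne_of_gt hfi
  have hFc : Fc f i = Fc f (i - 1) + f i := by
    conv_lhs => rw [show i = i - 1 + 1 from by omega]
    rw [Fc_succ f (i - 1), show i - 1 + 1 = i from by omega]
  by_cases hin : i < n
  · simp only [initVirt, gfun, if_pos hin, if_pos h2, if_pos (by omega : i + 1 ≤ n),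
      Nat.add_sub_cancel]
    rw [hFc]
    field_simp
    ring
  · have hieq : i = n := by omega
    subst hieq
    simp only [initVirt, gfun, if_neg hin, if_pos h2, if_neg (by omega : ¬ i + 1 ≤ i)]
    have hFn : Fc f i = 1 := hf.2
    have : f i = 1 - Fc f (i - 1) := by linarith
    rw [this]
    ring

lemma tele_aux (n : ℕ) (θ : ℕ → ℕ → ℝ) (f : ℕ → ℝ) (hf : IsProb n f) :
    ∀ t m, m = n + 1 - t → 1 ≤ m → ∀ k,
      ∑ i ∈ Finset.Icc m n, f i * initVirt n θ f i k = gfun n θ f m k := by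
  intro t
  induction t with
  | zero =>
    intro m hm _ k
    have hm' : m = n + 1 := by omega
    subst hm'
    rw [Finset.Icc_eq_empty (by omega), Finset.sum_empty]
    simp only [gfun]
    rw [if_neg (by omega)]
  | succ t ih =>
    intro m hm h1 k
    by_cases hmn : m ≤ n
    · have hlt : m < n + 1 := by omega
      rw [← Finset.Ico_add_one_right_eq_Icc, Finset.sum_eq_sum_Ico_succ_bot hlt, Finset.Ico_add_one_right_eq_Icc,
        virt_step n θ f hf h1 hmn k, ih (m + 1) (by omega) (by omega) k]
      ring
    · have hm' : m = n + 1 := by omega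
      subst hm'
      rw [Finset.Icc_eq_empty (by omega), Finset.sum_empty]
      simp only [gfun]
      rw [if_neg (by omega)]

lemma tele (n : ℕ) (θ : ℕ → ℕ → ℝ) (f : ℕ → ℝ) (hf : IsProb n f)
    {m : ℕ} (h1 : 1 ≤ m) (h2 : m ≤ n + 1) (k : ℕ) :
    ∑ i ∈ Finset.Icc m n, f i * initVirt n θ f i k = gfun n θ f m k :=
  tele_aux n θ f hf (n + 1 - m) m (by omega) h1 k

lemma rev_le_vw (d n : ℕ) (hn : 1 ≤ n) (θ : ℕ → ℕ → ℝ) (f : ℕ → ℝ) (hf : IsProb n f)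
    (q : ℕ → ℕ → ℝ) (t : ℕ → ℝ) (hmech : IsMechanism d n q t) (hic : ICIR d n θ q t) :
    revenue n f t ≤ vw d n f (initVirt n θ f) q := by
  set u : ℕ → ℝ := fun i => dot d (q i) (θ i) - t i with hu
  set D : ℕ → ℝ := fun i => dot d (q i) (θ (i + 1)) - dot d (q i) (θ i) with hD
  have hu0 : ∀ j ∈ Finset.Icc 1 n, 0 ≤ u j := by
    intro j hj
    have h := hic j hj 0 (Finset.mem_Icc.mpr ⟨Nat.zero_le _, by omega⟩)
    have hq0 : dot d (q 0) (θ j) = 0 := by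
      unfold dot
      apply Finset.sum_eq_zero
      intro k hk
      rw [hmech.1 k hk]; ring
    rw [hq0, hmech.2.1] at h
    simp only [hu]
    linarith
  have hstep : ∀ i, 1 ≤ i → i + 1 ≤ n → u i + D i ≤ u (i + 1) := by
    intro i hi1 hi2
    have h := hic (i + 1) (Finset.mem_Icc.mpr ⟨by omega, hi2⟩) i
      (Finset.mem_Icc.mpr ⟨Nat.zero_le _, by omega⟩)
    simp only [hu, hD]
    linarith
  have key : ∀ t', ∀ m, m = n - t' → 1 ≤ m →
      (1 - Fc f (m - 1)) * u m + ∑ i ∈ Finset.Icc m (n - 1), (1 - Fc f i) * D i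
        ≤ ∑ i ∈ Finset.Icc m n, f i * u i := by
    intro t'
    induction t' with
    | zero =>
      intro m hm h1
      have hm' : m = n := by omega
      subst hm'
      rw [Finset.Icc_eq_empty (by omega : ¬ m ≤ m - 1), Finset.sum_empty,
        Finset.Icc_self, Finset.sum_singleton]
      have h2 : Fc f m = Fc f (m - 1) + f m := by
        conv_lhs => rw [show m = m - 1 + 1 from by omega]
        rw [Fc_succ f (m - 1), show m - 1 + 1 = m from by omega]
      have hFn : Fc f m = 1 := hf.2
      have hfn : f m = 1 - Fc f (m - 1) := by linarith
      rw [hfn]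
      linarith
    | succ t' ih =>
      intro m hm h1
      have hmn : m + 1 ≤ n := by omega
      have ihm := ih (m + 1) (by omega) (by omega)
      have hsum1 : ∑ i ∈ Finset.Icc m n, f i * u i
          = f m * u m + ∑ i ∈ Finset.Icc (m + 1) n, f i * u i := by
        rw [← Finset.Ico_add_one_right_eq_Icc, Finset.sum_eq_sum_Ico_succ_bot (by omega : m < n + 1),
          Finset.Ico_add_one_right_eq_Icc]
      have hsum2 : ∑ i ∈ Finset.Icc m (n - 1), (1 - Fc f i) * D i
          = (1 - Fc f m) * D m + ∑ i ∈ Finset.Icc (m + 1) (n - 1), (1 - Fc f i) * D i := by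
        rw [← Finset.Ico_add_one_right_eq_Icc, Finset.sum_eq_sum_Ico_succ_bot (by omega : m < n - 1 + 1),
          Finset.Ico_add_one_right_eq_Icc]
      have hF : 0 ≤ 1 - Fc f m := by linarith [Fc_le_one n f hf (by omega : m ≤ n)]
      have hst := hstep m h1 hmn
      have hfm : f m = Fc f m - Fc f (m - 1) := by
        have h2 : Fc f m = Fc f (m - 1) + f m := by
          conv_lhs => rw [show m = m - 1 + 1 from by omega]
          rw [Fc_succ f (m - 1), show m - 1 + 1 = m from by omega]
        linarith
      have hmul := mul_le_mul_of_nonneg_left hst hF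
      have hmul' : (1 - Fc f m) * u m + (1 - Fc f m) * D m ≤ (1 - Fc f m) * u (m + 1) := by
        nlinarith [hmul]
      have e2 : (1 - Fc f (m - 1)) * u m = f m * u m + (1 - Fc f m) * u m := by
        rw [hfm]; ring
      rw [hsum1, hsum2]
      have h1m : m + 1 - 1 = m := by omega
      rw [h1m] at ihm
      linarith
  have key1 := key (n - 1) 1 (by omega) le_rfl
  have hu1 : 0 ≤ u 1 := hu0 1 (Finset.mem_Icc.mpr ⟨le_rfl, hn⟩)
  have e1 : (1 - Fc f (1 - 1)) * u 1 = u 1 := by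
    rw [show (1 : ℕ) - 1 = 0 from rfl, Fc_zero]; ring
  have hsumu : ∑ i ∈ Finset.Icc 1 (n - 1), (1 - Fc f i) * D i
      ≤ ∑ i ∈ Finset.Icc 1 n, f i * u i := by
    rw [e1] at key1
    linarith
  have hvw : vw d n f (initVirt n θ f) q
      = ∑ i ∈ Finset.Icc 1 n, f i * dot d (q i) (θ i)
        - ∑ i ∈ Finset.Icc 1 (n - 1), (1 - Fc f i) * D i := by
    have hterm : ∀ i ∈ Finset.Icc 1 n,
        f i * ∑ k ∈ Finset.Icc 1 d, q i k * initVirt n θ f i k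
          = f i * dot d (q i) (θ i) - (if i < n then (1 - Fc f i) * D i else 0) := by
      intro i hi
      obtain ⟨hi1, hi2⟩ := Finset.mem_Icc.mp hi
      have hne : f i ≠ 0 := ne_of_gt (hf.1 i hi)
      by_cases hin : i < n
      · simp only [initVirt, hin, if_true]
        have hc : ∀ k ∈ Finset.Icc 1 d,
            q i k * (θ i k - (1 - Fc f i) / f i * (θ (i + 1) k - θ i k))
              = q i k * θ i k
                - (1 - Fc f i) / f i * (q i k * θ (i + 1) k - q i k * θ i k) := by
          intro k _; ring
        rw [Finset.sum_congr rfl hc, Finset.sum_sub_distrib, ← Finset.mul_sum,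
          Finset.sum_sub_distrib]
        simp only [hD, dot]
        field_simp
      · have hieq : i = n := by omega
        subst hieq
        simp only [initVirt, hin, if_false, dot]
        ring
    rw [vw, Finset.sum_congr rfl hterm, Finset.sum_sub_distrib]
    congr 1
    rw [← Finset.Ico_add_one_right_eq_Icc, Finset.sum_Ico_succ_top (by omega : 1 ≤ n),
      if_neg (lt_irrefl n), add_zero,
      show Finset.Ico 1 n = Finset.Icc 1 (n - 1) from by
        rw [← Finset.Ico_add_one_right_eq_Icc]; congr 1; omega]
    apply Finset.sum_congr rfl
    intro i hi
    rw [if_pos (by have := Finset.mem_Icc.mp hi; omega)]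
  have hrev : revenue n f t
      = ∑ i ∈ Finset.Icc 1 n, f i * dot d (q i) (θ i)
        - ∑ i ∈ Finset.Icc 1 n, f i * u i := by
    unfold revenue
    rw [← Finset.sum_sub_distrib]
    apply Finset.sum_congr rfl
    intro i _
    simp only [hu]; ring
  rw [hrev, hvw]
  linarith

lemma vw_le (d n : ℕ) (θ : ℕ → ℕ → ℝ) (f : ℕ → ℝ) (hf : IsProb n f)
    (cut : ℕ → ℕ) (hcut : ∀ k ∈ Finset.Icc 1 d, cut k ∈ Finset.Icc 1 n)
    (hreg : Regular d n θ f cut)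
    (q : ℕ → ℕ → ℝ)
    (hq : ∀ i ∈ Finset.Icc 1 n, ∀ k ∈ Finset.Icc 1 d, 0 ≤ q i k ∧ q i k ≤ 1) :
    vw d n f (initVirt n θ f) q
      ≤ ∑ k ∈ Finset.Icc 1 d, (1 - Fc f (cut k - 1)) * θ (cut k) k := by
  have hb : vw d n f (initVirt n θ f) q
      ≤ ∑ i ∈ Finset.Icc 1 n, ∑ k ∈ Finset.Icc 1 d,
          (if cut k ≤ i then f i * initVirt n θ f i k else 0) := by
    unfold vw
    apply Finset.sum_le_sum
    intro i hi
    rw [Finset.mul_sum]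
    apply Finset.sum_le_sum
    intro k hk
    obtain ⟨hq0, hq1⟩ := hq i hi k hk
    have hfi : 0 < f i := hf.1 i hi
    by_cases hci : cut k ≤ i
    · rw [if_pos hci]
      have hφ : 0 ≤ initVirt n θ f i k := (hreg k hk (cut k) (hcut k hk) i hi le_rfl hci).2
      have h2 : q i k * initVirt n θ f i k ≤ initVirt n θ f i k := by
        nlinarith [mul_nonneg (sub_nonneg.mpr hq1) hφ]
      exact mul_le_mul_of_nonneg_left h2 hfi.le
    · rw [if_neg hci]
      have hile : i ≤ cut k := by omega
      have hφ : initVirt n θ f i k ≤ 0 := (hreg k hk i hi (cut k) (hcut k hk) hile le_rfl).1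
      have h2 : q i k * initVirt n θ f i k ≤ 0 := by
        nlinarith [mul_nonneg hq0 (neg_nonneg.mpr hφ)]
      nlinarith
  refine le_trans hb ?_
  rw [Finset.sum_comm]
  apply le_of_eq
  apply Finset.sum_congr rfl
  intro k hk
  obtain ⟨hc1, hc2⟩ := Finset.mem_Icc.mp (hcut k hk)
  have hfil : (Finset.Icc 1 n).filter (fun i => cut k ≤ i) = Finset.Icc (cut k) n := by
    ext a; simp only [Finset.mem_filter, Finset.mem_Icc]; omega
  rw [← Finset.sum_filter, hfil, tele n θ f hf hc1 (by omega) k]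
  simp only [gfun]
  rw [if_pos hc2]

lemma sep_mech (d n : ℕ) (θ : ℕ → ℕ → ℝ) (p : ℕ → ℝ) :
    IsMechanism d n (sepQ θ p) (sepT d θ p) := by
  refine ⟨fun k _ => by simp [sepQ], by simp [sepT, sepQ], ?_⟩
  intro i hi k _
  have hi0 : i ≠ 0 := by have := (Finset.mem_Icc.mp hi).1; omega
  simp only [sepQ, if_neg hi0]
  split <;> norm_num

lemma sep_icir (d n : ℕ) (θ : ℕ → ℕ → ℝ) (p : ℕ → ℝ) :
    ICIR d n θ (sepQ θ p) (sepT d θ p) := by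
  intro j hj i _
  have hj0 : j ≠ 0 := by have := (Finset.mem_Icc.mp hj).1; omega
  have hL : ∀ m : ℕ, dot d (sepQ θ p m) (θ j) - sepT d θ p m
      = ∑ k ∈ Finset.Icc 1 d, sepQ θ p m k * (θ j k - p k) := by
    intro m
    unfold dot sepT
    rw [← Finset.sum_sub_distrib]
    apply Finset.sum_congr rfl
    intro k _; ring
  rw [ge_iff_le, hL, hL]
  apply Finset.sum_le_sum
  intro k _
  have hQ : ∀ m, 0 ≤ sepQ θ p m k ∧ sepQ θ p m k ≤ 1 := by
    intro m
    simp only [sepQ]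
    split
    · norm_num
    · split <;> norm_num
  have hsj : sepQ θ p j k = if p k ≤ θ j k then 1 else 0 := by simp [sepQ, hj0]
  rw [hsj]
  by_cases hpk : p k ≤ θ j k
  · rw [if_pos hpk]
    nlinarith [(hQ i).2, sub_nonneg.mpr hpk,
      mul_nonneg (sub_nonneg.mpr (hQ i).2) (sub_nonneg.mpr hpk)]
  · rw [if_neg hpk]
    have hlt : θ j k - p k < 0 := by linarith [lt_of_not_ge hpk]
    nlinarith [(hQ i).1, mul_nonneg (hQ i).1 (neg_nonneg.mpr hlt.le)]

lemma sep_rev (d n : ℕ) (θ : ℕ → ℕ → ℝ)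
    (hθ : ∀ i ∈ Finset.Icc 1 n, ∀ k ∈ Finset.Icc 1 d, 0 ≤ θ i k)
    (f : ℕ → ℝ) (hf : IsProb n f) (hmono : MonotoneTypes d n θ)
    (cut : ℕ → ℕ) (hcut : ∀ k ∈ Finset.Icc 1 d, cut k ∈ Finset.Icc 1 n) :
    ∑ k ∈ Finset.Icc 1 d, (1 - Fc f (cut k - 1)) * θ (cut k) k
      ≤ revenue n f (sepT d θ (fun k => θ (cut k) k)) := by
  have hswap : ∀ k ∈ Finset.Icc 1 d,
      ∑ i ∈ Finset.Icc 1 n, (if cut k ≤ i then f i * θ (cut k) k else 0)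
        = (1 - Fc f (cut k - 1)) * θ (cut k) k := by
    intro k hk
    obtain ⟨hc1, hc2⟩ := Finset.mem_Icc.mp (hcut k hk)
    have hfil : (Finset.Icc 1 n).filter (fun i => cut k ≤ i) = Finset.Icc (cut k) n := by
      ext a; simp only [Finset.mem_filter, Finset.mem_Icc]; omega
    rw [← Finset.sum_filter, hfil, ← Finset.sum_mul, sum_Icc_f n f hf hc1 (by omega)]
  have hstep : ∀ i ∈ Finset.Icc 1 n,
      ∑ k ∈ Finset.Icc 1 d, (if cut k ≤ i then f i * θ (cut k) k else 0)
        ≤ f i * ∑ k ∈ Finset.Icc 1 d,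
            θ (cut k) k * sepQ θ (fun k => θ (cut k) k) i k := by
    intro i hi
    rw [Finset.mul_sum]
    apply Finset.sum_le_sum
    intro k hk
    have hfi : 0 ≤ f i := le_of_lt (hf.1 i hi)
    have hp0 : 0 ≤ θ (cut k) k := hθ (cut k) (hcut k hk) k hk
    have hi0 : i ≠ 0 := by have := (Finset.mem_Icc.mp hi).1; omega
    by_cases hci : cut k ≤ i
    · rw [if_pos hci]
      have hmle : θ (cut k) k ≤ θ i k := hmono (cut k) (hcut k hk) i hi hci k hk
      have hs1 : sepQ θ (fun k => θ (cut k) k) i k = 1 := by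
        simp [sepQ, hi0, hmle]
      rw [hs1, mul_one]
    · rw [if_neg hci]
      have hs : (0 : ℝ) ≤ sepQ θ (fun k => θ (cut k) k) i k := by
        simp only [sepQ]
        split
        · norm_num
        · split <;> norm_num
      exact mul_nonneg hfi (mul_nonneg hp0 hs)
  calc ∑ k ∈ Finset.Icc 1 d, (1 - Fc f (cut k - 1)) * θ (cut k) k
      = ∑ k ∈ Finset.Icc 1 d, ∑ i ∈ Finset.Icc 1 n,
          (if cut k ≤ i then f i * θ (cut k) k else 0) :=
        (Finset.sum_congr rfl hswap).symm
    _ = ∑ i ∈ Finset.Icc 1 n, ∑ k ∈ Finset.Icc 1 d,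
          (if cut k ≤ i then f i * θ (cut k) k else 0) := Finset.sum_comm
    _ ≤ ∑ i ∈ Finset.Icc 1 n, f i * ∑ k ∈ Finset.Icc 1 d,
          θ (cut k) k * sepQ θ (fun k => θ (cut k) k) i k := Finset.sum_le_sum hstep
    _ = revenue n f (sepT d θ (fun k => θ (cut k) k)) := by
        simp only [revenue, sepT]

/-- **Corollary 2 (optimality of separate monopoly pricing for monotone regular
instances)**: if the type space is monotone and the instance is regular w.r.t. cutoffs
`i^1,…,i^d`, then the separate pricing mechanism at prices `p_k = θ_{i^k}^k` is optimal. -/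
theorem separate_optimal_monotone_regular
    (d n : ℕ) (hd : 1 ≤ d) (hn : 1 ≤ n)
    (θ : ℕ → ℕ → ℝ) (hθ : ∀ i ∈ Finset.Icc 1 n, ∀ k ∈ Finset.Icc 1 d, 0 ≤ θ i k)
    (f : ℕ → ℝ) (hf : IsProb n f)
    (hmono : MonotoneTypes d n θ)
    (cut : ℕ → ℕ) (hcut : ∀ k ∈ Finset.Icc 1 d, cut k ∈ Finset.Icc 1 n)
    (hreg : Regular d n θ f cut) :
    Optimal d n θ f (sepQ θ (fun k => θ (cut k) k)) (sepT d θ (fun k => θ (cut k) k)) := by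
  refine ⟨sep_mech d n θ _, sep_icir d n θ _, ?_⟩
  intro q' t' hm hic
  have h1 := rev_le_vw d n hn θ f hf q' t' hm hic
  have h2 := vw_le d n θ f hf cut hcut hreg q' hm.2.2
  have h3 := sep_rev d n θ hθ f hf hmono cut hcut
  linarith
end
end
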